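/- Let N be a standard real subspace of a complex Hilbert space H. There exists a standard real subspace M with N ⊊ M (proper inclusion) if and only if the pair (N, iN) is not strongly standard, i.e., if and only if N + iN ≠ H. -/
import Mathlib


/-- Multiplication by `i` as a real-linear map. -/
noncomputable def mulI (H : Type*) [NormedAddCommGroup H] [InnerProductSpace ℂ H] :
    H →ₗ[ℝ] H where
  toFun x := (Complex.I : ℂ) • x
  map_add' x y := smul_add _ x y
  map_smul' r x := by simpa using (smul_comm (Complex.I) r x)

/-- A closed subspace plus a line is closed. -/
lemma isClosed_sup_span {E : Type*} [NormedAddCommGroup E] [NormedSpace ℝ E]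
    (N : Submodule ℝ E) (hN : IsClosed (N : Set E)) (y : E) :
    IsClosed ((N ⊔ Submodule.span ℝ {y} : Submodule ℝ E) : Set E) := by
  haveI : IsClosed ((N : Set E)) := hN
  have hcont : Continuous N.mkQ := by
    refine AddMonoidHomClass.continuous_of_bound N.mkQ 1 fun x => ?_
    simpa using Submodule.Quotient.norm_mk_le N x
  have hmap : Submodule.map N.mkQ (Submodule.span ℝ {y}) = Submodule.span ℝ {N.mkQ y} := by
    rw [Submodule.map_span, Set.image_singleton]
  have hfd : FiniteDimensional ℝ (Submodule.span ℝ {N.mkQ y}) := by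
    infer_instance
  have hclosed : IsClosed ((Submodule.span ℝ {N.mkQ y} : Submodule ℝ (E ⧸ N)) : Set (E ⧸ N)) :=
    Submodule.closed_of_finiteDimensional _
  have hcomap : N ⊔ Submodule.span ℝ {y} =
      Submodule.comap N.mkQ (Submodule.span ℝ {N.mkQ y}) := by
    rw [← hmap, Submodule.comap_map_eq, Submodule.ker_mkQ, sup_comm]
  rw [hcomap]
  exact hclosed.preimage hcont

/-- A standard real subspace `N` of a complex Hilbert space admits
a proper standard extension `M` if and only if the pair `(N, iN)` is not
strongly standard, i.e. iff `N + iN ≠ H`. -/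
theorem exists_standard_extension_iff_not_strongly_standard {H : Type*}
    [NormedAddCommGroup H] [InnerProductSpace ℂ H] [CompleteSpace H]
    (N : Submodule ℝ H) (hNc : IsClosed (N : Set H))
    (hstd1 : N ⊓ N.map (mulI H) = ⊥)
    (hstd2 : (N ⊔ N.map (mulI H)).topologicalClosure = ⊤) :
    (∃ M : Submodule ℝ H, IsClosed (M : Set H) ∧ M ⊓ M.map (mulI H) = ⊥ ∧
        (M ⊔ M.map (mulI H)).topologicalClosure = ⊤ ∧ N < M)
      ↔ N ⊔ N.map (mulI H) ≠ ⊤ := by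
  constructor
  · rintro ⟨M, hMc, hM1, hM2, hNM⟩ htop
    -- Take y ∈ M \ N
    obtain ⟨y, hyM, hyN⟩ := SetLike.exists_of_lt hNM
    -- y = a + I • b with a, b ∈ N
    have hy : y ∈ N ⊔ N.map (mulI H) := htop ▸ Submodule.mem_top
    obtain ⟨a, ha, c, hc, rfl⟩ := Submodule.mem_sup.mp hy
    obtain ⟨b, hb, rfl⟩ := hc
    have hbM : mulI H b ∈ M ⊓ M.map (mulI H) := by
      refine ⟨?_, ⟨b, hNM.le hb, rfl⟩⟩
      have : (a + mulI H b) - a ∈ M := Submodule.sub_mem M hyM (hNM.le ha)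
      simpa using this
    rw [hM1, Submodule.mem_bot] at hbM
    exact hyN (by simp [hbM, ha])
  · intro htop
    -- choose y not in N + iN
    have : ∃ y, y ∉ N ⊔ N.map (mulI H) := by
      by_contra h
      push_neg at h
      exact htop (Submodule.eq_top_iff'.mpr h)
    obtain ⟨y, hy⟩ := this
    set P := N ⊔ N.map (mulI H) with hP
    -- P is stable under multiplication by I
    have hPstable : ∀ z ∈ P, mulI H z ∈ P := by
      intro z hz
      obtain ⟨a, ha, c, hc, rfl⟩ := Submodule.mem_sup.mp hz
      obtain ⟨b, hb, rfl⟩ := hc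
      have : mulI H (a + mulI H b) = mulI H a + (-b) := by
        simp only [mulI, LinearMap.coe_mk, AddHom.coe_mk]
        rw [smul_add, smul_smul, Complex.I_mul_I, neg_one_smul]
      rw [this]
      exact Submodule.add_mem _ (Submodule.mem_sup_right ⟨a, ha, rfl⟩)
        (Submodule.mem_sup_left (Submodule.neg_mem _ hb))
    -- hence stable under all complex scalars
    have hPsmul : ∀ (c : ℂ) (z : H), z ∈ P → c • z ∈ P := by
      intro c z hz
      have : c • z = c.re • z + c.im • (mulI H z) := by
        simp only [mulI, LinearMap.coe_mk, AddHom.coe_mk]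
        rw [← Complex.coe_smul c.re, ← Complex.coe_smul c.im, smul_smul,
          ← add_smul, Complex.re_add_im]
      rw [this]
      exact Submodule.add_mem _ (Submodule.smul_mem _ _ hz)
        (Submodule.smul_mem _ _ (hPstable z hz))
    refine ⟨N ⊔ Submodule.span ℝ {y}, isClosed_sup_span N hNc y, ?_, ?_, ?_⟩
    · -- M ∩ iM = ⊥
      rw [eq_bot_iff]
      rintro x ⟨hx1, hx2⟩
      obtain ⟨n, hn, c, hc, hx⟩ := Submodule.mem_sup.mp hx1
      obtain ⟨r, rfl⟩ := Submodule.mem_span_singleton.mp hc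
      obtain ⟨w, hw, hxw⟩ := hx2
      obtain ⟨n', hn', c', hc', hw'⟩ := Submodule.mem_sup.mp hw
      obtain ⟨s, rfl⟩ := Submodule.mem_span_singleton.mp hc'
      -- x = n + r•y and x = I•(n' + s•y)
      have h1 : n + r • y = mulI H n' + s • (mulI H y) := by
        have h2 : mulI H (n' + s • y) = mulI H n' + s • (mulI H y) := by
          simp only [mulI, LinearMap.coe_mk, AddHom.coe_mk]
          rw [smul_add, smul_comm]
        rw [hx, ← hxw, ← hw', h2]
      have key : ((r : ℂ) - s * Complex.I) • y = mulI H n' - n := by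
        have h3 : r • y - s • (mulI H y) = mulI H n' - n := by
          have := h1
          rw [← sub_eq_iff_eq_add'] at this
          rw [← this]; abel
        rw [← h3]
        simp only [mulI, LinearMap.coe_mk, AddHom.coe_mk]
        rw [← Complex.coe_smul r, ← Complex.coe_smul s, smul_smul, sub_smul]
      have hmem : ((r : ℂ) - s * Complex.I) • y ∈ P := by
        rw [key]
        exact Submodule.sub_mem _ (Submodule.mem_sup_right ⟨n', hn', rfl⟩)
          (Submodule.mem_sup_left hn)
      have hrs : (r : ℂ) - s * Complex.I = 0 := by
        by_contra hne
        apply hy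
        have := hPsmul ((r : ℂ) - s * Complex.I)⁻¹ _ hmem
        rwa [smul_smul, inv_mul_cancel₀ hne, one_smul] at this
      have hr : r = 0 ∧ s = 0 := by
        constructor
        · have := congrArg Complex.re hrs; simpa using this
        · have := congrArg Complex.im hrs; simpa using this
      -- now x = n ∈ N and x = mulI H n' ∈ iN
      have hxn : x = n := by rw [← hx, hr.1]; simp
      have hxn' : x = mulI H n' := by
        rw [← hxw, ← hw', hr.2]
        simp only [mulI, LinearMap.coe_mk, AddHom.coe_mk]
        simp
      have : x ∈ N ⊓ N.map (mulI H) := ⟨hxn ▸ hn, ⟨n', hn', hxn'.symm⟩⟩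
      rw [hstd1, Submodule.mem_bot] at this
      simp [this]
    · -- density
      rw [eq_top_iff, ← hstd2]
      apply Submodule.topologicalClosure_mono
      exact sup_le_sup (le_sup_left) (Submodule.map_mono le_sup_left)
    · -- N < M
      refine lt_of_le_of_ne le_sup_left fun h => ?_
      apply hy
      apply Submodule.mem_sup_left
      rw [h]
      exact Submodule.mem_sup_right (Submodule.mem_span_singleton_self y)
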